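/- Let ȳ ∈ (0,∞], k ∈ (0,ȳ], m a monotone measure on (X,𝒜), and ▵ : m(𝒜)×m(𝒜) → m(𝒜) with a ▵ 0 = 0 ▵ a = 0 for all a ∈ m(𝒜). Let ⋆,⊥ : [0,ȳ]² → [0,ȳ] be nondecreasing binary operations with ⊥ left-continuous. Let φ₁ : [0,ȳ] → [0,ȳ] be nondecreasing and φ₂, φ₃ : [0,ȳ] → [0,ȳ] be increasing and right-continuous; let ψᵢ : [0,φᵢ(ȳ)] → [0,ȳ] be nondecreasing for i=1,2,3 with ψ₂, ψ₃ left-continuous. Let ∘ᵢ : [0,ȳ] × m(𝒜) → [0,ȳ] be nondecreasing with φᵢ(ȳ) ∘ᵢ m(X) ≤ φᵢ(ȳ) for i=1,2,3 and ȳ ∘ᵢ 0 = 0 for i=1,2,3. Assume condition (Z₁): for all c,d ∈ m(𝒜) there exist C,D ∈ 𝒜 with m(C)=c, m(D)=d and m(C∩D) = c ▵ d. If the inequality ψ₁(I_{∘₁, A∩B}(φ₁(f⋆g))) ≥ ψ₂(I_{∘₂, A}(φ₂(f))) ⊥ ψ₃(I_{∘₃, B}(φ₃(g))) holds for all A,B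 ∈ 𝒜 and all f,g ∈ F^k such that f|_A and g|_B are m-positively dependent with respect to ▵, then ψ₁(φ₁(a⋆b) ∘₁ (c▵d)) ≥ ψ₂(φ₂(a) ∘₂ c) ⊥ ψ₃(φ₃(b) ∘₃ d) for all a,b ∈ [0,k] and all c,d ∈ m(𝒜). -/

import Mathlib

open Set ENNReal

noncomputable def uSugeno {X : Type*} (ybar : ℝ≥0∞) (op : ℝ≥0∞ → ℝ≥0∞ → ℝ≥0∞)
    (m : Set X → ℝ≥0∞) (D : Set X) (f : X → ℝ≥0∞) : ℝ≥0∞ :=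
  ⨆ t ∈ Set.Iic ybar, op t (m (D ∩ {x | t ≤ f x}))

noncomputable def qInt {X : Type*} (oti : ℝ≥0∞ → ℝ≥0∞ → ℝ≥0∞)
    (m : Set X → ℝ≥0∞) (f : X → ℝ≥0∞) : ℝ≥0∞ :=
  ⨆ t ∈ Set.Iic (1 : ℝ≥0∞), oti (m {x | t ≤ f x}) t

def Mono2On (op : ℝ≥0∞ → ℝ≥0∞ → ℝ≥0∞) (s t : Set ℝ≥0∞) : Prop :=
  ∀ ⦃a₁⦄, a₁ ∈ s → ∀ ⦃b₁⦄, b₁ ∈ t → ∀ ⦃a₂⦄, a₂ ∈ s → ∀ ⦃b₂⦄, b₂ ∈ t →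
    a₁ ≤ a₂ → b₁ ≤ b₂ → op a₁ b₁ ≤ op a₂ b₂

def LeftContOn (g : ℝ≥0∞ → ℝ≥0∞) (s : Set ℝ≥0∞) : Prop :=
  ∀ x ∈ s, ContinuousWithinAt g (Set.Iic x) x

def RightContOn (g : ℝ≥0∞ → ℝ≥0∞) (s : Set ℝ≥0∞) : Prop :=
  ∀ x ∈ s, ContinuousWithinAt g (Set.Ici x) x

def LeftCont2On (op : ℝ≥0∞ → ℝ≥0∞ → ℝ≥0∞) (s t : Set ℝ≥0∞) : Prop :=
  (∀ b ∈ t, ∀ a ∈ s, ContinuousWithinAt (fun x => op x b) (Set.Iic a) a) ∧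
  (∀ a ∈ s, ∀ b ∈ t, ContinuousWithinAt (fun y => op a y) (Set.Iic b) b)

def mRange {X : Type*} [MeasurableSpace X] (m : Set X → ℝ≥0∞) : Set ℝ≥0∞ :=
  {c | ∃ A : Set X, MeasurableSet A ∧ m A = c}

def MonotoneMeasure {X : Type*} [MeasurableSpace X] (m : Set X → ℝ≥0∞) : Prop :=
  m ∅ = 0 ∧ 0 < m Set.univ ∧
    ∀ ⦃A B : Set X⦄, MeasurableSet A → MeasurableSet B → A ⊆ B → m A ≤ m B

def IsCapacity {X : Type*} [MeasurableSpace X] (m : Set X → ℝ≥0∞) : Prop :=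
  m ∅ = 0 ∧ m Set.univ = 1 ∧
    ∀ ⦃A B : Set X⦄, MeasurableSet A → MeasurableSet B → A ⊆ B → m A ≤ m B

def ComonotoneOn {X : Type*} (D : Set X) (f g : X → ℝ≥0∞) : Prop :=
  ∀ x ∈ D, ∀ y ∈ D, f x < f y → g x ≤ g y

def IsSemicopula (S : ℝ≥0∞ → ℝ≥0∞ → ℝ≥0∞) : Prop :=
  Mono2On S (Set.Iic 1) (Set.Iic 1) ∧
    ∀ a ∈ Set.Iic (1 : ℝ≥0∞), S a 1 = a ∧ S 1 a = a

def MPosDep {X : Type*} (m : Set X → ℝ≥0∞) (tri : ℝ≥0∞ → ℝ≥0∞ → ℝ≥0∞)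
    (k : ℝ≥0∞) (A B : Set X) (f g : X → ℝ≥0∞) : Prop :=
  ∀ α ∈ Set.Iic k, ∀ β ∈ Set.Iic k,
    tri (m (A ∩ {x | α ≤ f x})) (m (B ∩ {x | β ≤ g x})) ≤
      m (A ∩ B ∩ {x | α ≤ f x} ∩ {x | β ≤ g x})

lemma uSugeno_const_on {X : Type*} [MeasurableSpace X]
    (ybar : ℝ≥0∞) (op : ℝ≥0∞ → ℝ≥0∞ → ℝ≥0∞) (m : Set X → ℝ≥0∞)
    (hmono : Mono2On op (Set.Iic ybar) (mRange m)) (hzero : op ybar 0 = 0)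
    (h0 : m ∅ = 0) (C : Set X) (hC : MeasurableSet C)
    (F : X → ℝ≥0∞) (v : ℝ≥0∞) (hv : v ≤ ybar) (hF : ∀ x ∈ C, F x = v) :
    uSugeno ybar op m C F = op v (m C) := by
  have hCmem : m C ∈ mRange m := ⟨C, hC, rfl⟩
  have h0mem : (0 : ℝ≥0∞) ∈ mRange m := ⟨∅, MeasurableSet.empty, h0⟩
  have hset : ∀ t : ℝ≥0∞, C ∩ {x | t ≤ F x} = if t ≤ v then C else ∅ := by
    intro t
    split_ifs with ht
    · ext x
      simp only [Set.mem_inter_iff, Set.mem_setOf_eq, and_iff_left_iff_imp]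
      intro hx; rw [hF x hx]; exact ht
    · ext x
      simp only [Set.mem_inter_iff, Set.mem_setOf_eq, Set.mem_empty_iff_false, iff_false]
      rintro ⟨hx, hle⟩
      exact ht (hF x hx ▸ hle)
  apply le_antisymm
  · apply iSup₂_le
    intro t ht
    rw [hset t]
    split_ifs with h
    · exact hmono ht hCmem (le_trans hv (le_refl _) : v ∈ Set.Iic ybar) hCmem h le_rfl
    · rw [h0]
      have h1 : op t 0 ≤ op ybar 0 := hmono ht h0mem (le_refl ybar) h0mem ht le_rfl
      exact (h1.trans_eq hzero).trans (zero_le)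
  · have := le_iSup₂ (f := fun t (_ : t ∈ Set.Iic ybar) => op t (m (C ∩ {x | t ≤ F x}))) v hv
    rw [hset v, if_pos le_rfl] at this
    exact this

theorem statement2 {X : Type*} [MeasurableSpace X]
    (ybar k : ℝ≥0∞) (hybar : 0 < ybar) (hk0 : 0 < k) (hky : k ≤ ybar)
    (m : Set X → ℝ≥0∞) (hm : MonotoneMeasure m)
    (tri : ℝ≥0∞ → ℝ≥0∞ → ℝ≥0∞)
    (htri_maps : ∀ c ∈ mRange m, ∀ d ∈ mRange m, tri c d ∈ mRange m)
    (htri_zero : ∀ a ∈ mRange m, tri a 0 = 0 ∧ tri 0 a = 0)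
    (star bot : ℝ≥0∞ → ℝ≥0∞ → ℝ≥0∞)
    (hstar_maps : ∀ a ∈ Set.Iic ybar, ∀ b ∈ Set.Iic ybar, star a b ∈ Set.Iic ybar)
    (hstar_mono : Mono2On star (Set.Iic ybar) (Set.Iic ybar))
    (hbot_maps : ∀ a ∈ Set.Iic ybar, ∀ b ∈ Set.Iic ybar, bot a b ∈ Set.Iic ybar)
    (hbot_mono : Mono2On bot (Set.Iic ybar) (Set.Iic ybar))
    (hbot_lc : LeftCont2On bot (Set.Iic ybar) (Set.Iic ybar))
    (φ₁ φ₂ φ₃ : ℝ≥0∞ → ℝ≥0∞)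
    (hφ₁_maps : Set.MapsTo φ₁ (Set.Iic ybar) (Set.Iic ybar))
    (hφ₁_mono : MonotoneOn φ₁ (Set.Iic ybar))
    (hφ₂_maps : Set.MapsTo φ₂ (Set.Iic ybar) (Set.Iic ybar))
    (hφ₂_mono : StrictMonoOn φ₂ (Set.Iic ybar))
    (hφ₂_rc : RightContOn φ₂ (Set.Iic ybar))
    (hφ₃_maps : Set.MapsTo φ₃ (Set.Iic ybar) (Set.Iic ybar))
    (hφ₃_mono : StrictMonoOn φ₃ (Set.Iic ybar))
    (hφ₃_rc : RightContOn φ₃ (Set.Iic ybar))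
    (ψ₁ ψ₂ ψ₃ : ℝ≥0∞ → ℝ≥0∞)
    (hψ₁_maps : Set.MapsTo ψ₁ (Set.Iic (φ₁ ybar)) (Set.Iic ybar))
    (hψ₁_mono : MonotoneOn ψ₁ (Set.Iic (φ₁ ybar)))
    (hψ₂_maps : Set.MapsTo ψ₂ (Set.Iic (φ₂ ybar)) (Set.Iic ybar))
    (hψ₂_mono : MonotoneOn ψ₂ (Set.Iic (φ₂ ybar)))
    (hψ₂_lc : LeftContOn ψ₂ (Set.Iic (φ₂ ybar)))
    (hψ₃_maps : Set.MapsTo ψ₃ (Set.Iic (φ₃ ybar)) (Set.Iic ybar))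
    (hψ₃_mono : MonotoneOn ψ₃ (Set.Iic (φ₃ ybar)))
    (hψ₃_lc : LeftContOn ψ₃ (Set.Iic (φ₃ ybar)))
    (op₁ op₂ op₃ : ℝ≥0∞ → ℝ≥0∞ → ℝ≥0∞)
    (hop₁_maps : ∀ a ∈ Set.Iic ybar, ∀ c ∈ mRange m, op₁ a c ∈ Set.Iic ybar)
    (hop₁_mono : Mono2On op₁ (Set.Iic ybar) (mRange m))
    (hop₁_bd : op₁ (φ₁ ybar) (m Set.univ) ≤ φ₁ ybar)
    (hop₁_zero : op₁ ybar 0 = 0)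
    (hop₂_maps : ∀ a ∈ Set.Iic ybar, ∀ c ∈ mRange m, op₂ a c ∈ Set.Iic ybar)
    (hop₂_mono : Mono2On op₂ (Set.Iic ybar) (mRange m))
    (hop₂_bd : op₂ (φ₂ ybar) (m Set.univ) ≤ φ₂ ybar)
    (hop₂_zero : op₂ ybar 0 = 0)
    (hop₃_maps : ∀ a ∈ Set.Iic ybar, ∀ c ∈ mRange m, op₃ a c ∈ Set.Iic ybar)
    (hop₃_mono : Mono2On op₃ (Set.Iic ybar) (mRange m))
    (hop₃_bd : op₃ (φ₃ ybar) (m Set.univ) ≤ φ₃ ybar)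
    (hop₃_zero : op₃ ybar 0 = 0)
    (hZ₁ : ∀ c ∈ mRange m, ∀ d ∈ mRange m, ∃ C D : Set X,
      MeasurableSet C ∧ MeasurableSet D ∧ m C = c ∧ m D = d ∧ m (C ∩ D) = tri c d)
    (hcheb : ∀ (A B : Set X), MeasurableSet A → MeasurableSet B →
      ∀ (f g : X → ℝ≥0∞), Measurable f → Measurable g →
        (∀ x, f x ≤ k) → (∀ x, g x ≤ k) → MPosDep m tri k A B f g →
          bot (ψ₂ (uSugeno ybar op₂ m A fun x => φ₂ (f x)))
              (ψ₃ (uSugeno ybar op₃ m B fun x => φ₃ (g x)))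
            ≤ ψ₁ (uSugeno ybar op₁ m (A ∩ B) fun x => φ₁ (star (f x) (g x)))) :
    ∀ a ∈ Set.Iic k, ∀ b ∈ Set.Iic k, ∀ c ∈ mRange m, ∀ d ∈ mRange m,
      bot (ψ₂ (op₂ (φ₂ a) c)) (ψ₃ (op₃ (φ₃ b) d)) ≤
        ψ₁ (op₁ (φ₁ (star a b)) (tri c d)) := by
  classical
  intro a ha b hb c hc d hd
  obtain ⟨C, D, hCmeas, hDmeas, hmC, hmD, hmCD⟩ := hZ₁ c hc d hd
  set f : X → ℝ≥0∞ := fun x => if x ∈ C then a else 0 with hf_def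
  set g : X → ℝ≥0∞ := fun x => if x ∈ D then b else 0 with hg_def
  have hfmeas : Measurable f := Measurable.ite hCmeas measurable_const measurable_const
  have hgmeas : Measurable g := Measurable.ite hDmeas measurable_const measurable_const
  have hfk : ∀ x, f x ≤ k := by intro x; simp only [hf_def]; split_ifs; exact ha; exact zero_le
  have hgk : ∀ x, g x ≤ k := by intro x; simp only [hg_def]; split_ifs; exact hb; exact zero_le
  have hm0 : m ∅ = 0 := hm.1
  have hay : a ≤ ybar := le_trans ha hky
  have hby : b ≤ ybar := le_trans hb hky
  -- positive dependence
  have hdep : MPosDep m tri k C D f g := by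
    intro α hα β hβ
    by_cases hαa : α ≤ a
    · by_cases hβb : β ≤ b
      · have h1 : C ∩ {x | α ≤ f x} = C := by
          ext x
          simp only [Set.mem_inter_iff, Set.mem_setOf_eq, and_iff_left_iff_imp]
          intro hx; simp only [hf_def, if_pos hx]; exact hαa
        have h2 : D ∩ {x | β ≤ g x} = D := by
          ext x
          simp only [Set.mem_inter_iff, Set.mem_setOf_eq, and_iff_left_iff_imp]
          intro hx; simp only [hg_def, if_pos hx]; exact hβb
        have h3 : C ∩ D ∩ {x | α ≤ f x} ∩ {x | β ≤ g x} = C ∩ D := by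
          ext x
          simp only [Set.mem_inter_iff, Set.mem_setOf_eq]
          constructor
          · rintro ⟨⟨⟨h, h'⟩, _⟩, _⟩; exact ⟨h, h'⟩
          · rintro ⟨h, h'⟩
            refine ⟨⟨⟨h, h'⟩, ?_⟩, ?_⟩
            · simp only [hf_def, if_pos h]; exact hαa
            · simp only [hg_def, if_pos h']; exact hβb
        rw [h1, h2, h3, hmC, hmD, hmCD]
      · have h2 : D ∩ {x | β ≤ g x} = ∅ := by
          ext x
          simp only [Set.mem_inter_iff, Set.mem_setOf_eq, Set.mem_empty_iff_false, iff_false]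
          rintro ⟨hx, hle⟩
          simp only [hg_def, if_pos hx] at hle
          exact hβb hle
        rw [h2, hm0, (htri_zero _ ⟨C ∩ {x | α ≤ f x},
          hCmeas.inter (hfmeas measurableSet_Ici : MeasurableSet {x | α ≤ f x}), rfl⟩).1]
        exact zero_le
    · have h1 : C ∩ {x | α ≤ f x} = ∅ := by
        ext x
        simp only [Set.mem_inter_iff, Set.mem_setOf_eq, Set.mem_empty_iff_false, iff_false]
        rintro ⟨hx, hle⟩
        simp only [hf_def, if_pos hx] at hle
        exact hαa hle
      rw [h1, hm0, (htri_zero _ ⟨D ∩ {x | β ≤ g x},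
        hDmeas.inter (hgmeas measurableSet_Ici : MeasurableSet {x | β ≤ g x}), rfl⟩).2]
      exact zero_le
  have key := hcheb C D hCmeas hDmeas f g hfmeas hgmeas hfk hgk hdep
  -- evaluate the three integrals
  have e2 : uSugeno ybar op₂ m C (fun x => φ₂ (f x)) = op₂ (φ₂ a) c := by
    rw [uSugeno_const_on ybar op₂ m hop₂_mono hop₂_zero hm0 C hCmeas _ (φ₂ a)
      (hφ₂_maps hay) (fun x hx => by simp [hf_def, if_pos hx]), hmC]
  have e3 : uSugeno ybar op₃ m D (fun x => φ₃ (g x)) = op₃ (φ₃ b) d := by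
    rw [uSugeno_const_on ybar op₃ m hop₃_mono hop₃_zero hm0 D hDmeas _ (φ₃ b)
      (hφ₃_maps hby) (fun x hx => by simp [hg_def, if_pos hx]), hmD]
  have e1 : uSugeno ybar op₁ m (C ∩ D) (fun x => φ₁ (star (f x) (g x)))
      = op₁ (φ₁ (star a b)) (tri c d) := by
    rw [uSugeno_const_on ybar op₁ m hop₁_mono hop₁_zero hm0 (C ∩ D) (hCmeas.inter hDmeas)
      _ (φ₁ (star a b)) (hφ₁_maps (hstar_maps a hay b hby))
      (fun x hx => by simp [hf_def, hg_def, if_pos hx.1, if_pos hx.2]), hmCD]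
  rw [e1, e2, e3] at key
  exact key
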